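/- Let ρ₀ = (1/6)·[[2,0,0,0],[0,1,1,0],[0,1,1,0],[0,0,0,2]] and ρ₁ = (1/2)·[[0,0,0,0],[0,1,-1,0],[0,-1,1,0],[0,0,0,0]] be 4×4 complex matrices indexed by Fin 2 × Fin 2. For a matrix M indexed by ((Fin 2 × Fin 2) × (Fin 2 × Fin 2)) × ((Fin 2 × Fin 2) × (Fin 2 × Fin 2)), define the partial transpose on both B-qubits by M^{T_BB}(((a₁,b₁),(a₂,b₂)),((c₁,d₁),(c₂,d₂))) = M(((a₁,d₁),(a₂,d₂)),((c₁,b₁),(c₂,b₂))). Then for every matrix Π₀ indexed by (Fin 2 × Fin 2) × (Fin 2 × Fin 2) such that Π₀, 1 − Π₀, Π₀^{T_BB}, and (1 − Π₀)^{T_BB} are all positive semidefinite, the real part of (1/2)·(Tr(Π₀·(ρ₀ ⊗ₖ ρ₀)) + Tr((1 − Π₀)·(ρ₁ ⊗ₖ ρ₁))) is at most 17/18. -/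

import Mathlib

open Matrix
open scoped Kronecker ComplexOrder

noncomputable section

/-- Encode a pair of qubits (row/column order 00, 01, 10, 11) as an index in `Fin 4`. -/
def idx4 : Fin 2 × Fin 2 → Fin 4 :=
  fun p => ⟨2 * p.1.val + p.2.val, by have := p.1.isLt; have := p.2.isLt; omega⟩

/-- Uniform mixture of the three symmetric Bell states. -/
def ρ₀ : Matrix (Fin 2 × Fin 2) (Fin 2 × Fin 2) ℂ :=
  (1/6 : ℂ) • Matrix.of fun p q =>
    (!![2,0,0,0; 0,1,1,0; 0,1,1,0; 0,0,0,2] : Matrix (Fin 4) (Fin 4) ℂ) (idx4 p) (idx4 q)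

/-- The antisymmetric Bell state. -/
def ρ₁ : Matrix (Fin 2 × Fin 2) (Fin 2 × Fin 2) ℂ :=
  (1/2 : ℂ) • Matrix.of fun p q =>
    (!![0,0,0,0; 0,1,-1,0; 0,-1,1,0; 0,0,0,0] : Matrix (Fin 4) (Fin 4) ℂ) (idx4 p) (idx4 q)

/-- Partial transpose on both of B's qubits:
`M^{T_BB}(((a₁,b₁),(a₂,b₂)),((c₁,d₁),(c₂,d₂))) = M(((a₁,d₁),(a₂,d₂)),((c₁,b₁),(c₂,b₂)))`. -/
def ptBB
    (M : Matrix ((Fin 2 × Fin 2) × (Fin 2 × Fin 2)) ((Fin 2 × Fin 2) × (Fin 2 × Fin 2)) ℂ) :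
    Matrix ((Fin 2 × Fin 2) × (Fin 2 × Fin 2)) ((Fin 2 × Fin 2) × (Fin 2 × Fin 2)) ℂ :=
  Matrix.of fun p q =>
    M ((p.1.1, q.1.2), (p.2.1, q.2.2)) ((q.1.1, p.1.2), (q.2.1, p.2.2))

/-! ### Auxiliary general lemmas -/

lemma trace_nonneg_of_psd {n : Type} [Fintype n] [DecidableEq n] {A : Matrix n n ℂ}
    (hA : A.PosSemidef) : 0 ≤ A.trace := by
  exact hA.trace_nonneg

lemma trace_mul_nonneg {n : Type} [Fintype n] [DecidableEq n] {A B : Matrix n n ℂ}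
    (hA : A.PosSemidef) (hB : B.PosSemidef) : 0 ≤ (A * B).trace := by
  open scoped MatrixOrder in
  obtain ⟨a, rfl⟩ := CStarAlgebra.nonneg_iff_eq_star_mul_self.mp hA.nonneg
  have key := hB.mul_mul_conjTranspose_same a
  rw [Matrix.star_eq_conjTranspose, Matrix.mul_assoc, Matrix.trace_mul_comm]
  exact trace_nonneg_of_psd key

lemma kron_conjTranspose {m n : Type} [Fintype m] [Fintype n]
    (A : Matrix m m ℂ) (B : Matrix n n ℂ) : (A ⊗ₖ B)ᴴ = Aᴴ ⊗ₖ Bᴴ := by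
  ext ⟨a, b⟩ ⟨c, d⟩
  simp [Matrix.conjTranspose_apply, star_mul']

lemma kron_psd {m n : Type} [Fintype m] [Fintype n] [DecidableEq m] [DecidableEq n]
    {A : Matrix m m ℂ} {B : Matrix n n ℂ} (hA : A.PosSemidef) (hB : B.PosSemidef) :
    (A ⊗ₖ B).PosSemidef := by
  exact hA.kronecker hB

/-! ### ptBB lemmas -/

def eBB : (((Fin 2 × Fin 2) × (Fin 2 × Fin 2)) × ((Fin 2 × Fin 2) × (Fin 2 × Fin 2)))
    ≃ (((Fin 2 × Fin 2) × (Fin 2 × Fin 2)) × ((Fin 2 × Fin 2) × (Fin 2 × Fin 2))) where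
  toFun x := (((x.1.1.1, x.2.1.2), (x.1.2.1, x.2.2.2)), ((x.2.1.1, x.1.1.2), (x.2.2.1, x.1.2.2)))
  invFun x := (((x.1.1.1, x.2.1.2), (x.1.2.1, x.2.2.2)), ((x.2.1.1, x.1.1.2), (x.2.2.1, x.1.2.2)))
  left_inv _ := rfl
  right_inv _ := rfl

lemma trace_mul_ptBB (M N : Matrix ((Fin 2 × Fin 2) × (Fin 2 × Fin 2))
    ((Fin 2 × Fin 2) × (Fin 2 × Fin 2)) ℂ) :
    (M * ptBB N).trace = (ptBB M * N).trace := by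
  simp only [Matrix.trace, Matrix.diag, Matrix.mul_apply]
  rw [← Fintype.sum_prod_type', ← Fintype.sum_prod_type']
  exact Fintype.sum_equiv eBB _ _ (fun x => rfl)

lemma ptBB_sub (M N : Matrix ((Fin 2 × Fin 2) × (Fin 2 × Fin 2))
    ((Fin 2 × Fin 2) × (Fin 2 × Fin 2)) ℂ) : ptBB (M - N) = ptBB M - ptBB N := rfl

lemma ptBB_one : ptBB 1 = 1 := by
  ext p q
  simp only [ptBB, Matrix.of_apply, Matrix.one_apply, Prod.ext_iff]
  by_cases h1 : p.1.1 = q.1.1 <;> by_cases h2 : p.1.2 = q.1.2 <;>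
    by_cases h3 : p.2.1 = q.2.1 <;> by_cases h4 : p.2.2 = q.2.2 <;> simp_all <;> tauto

/-! ### The dual certificate -/

def Cmat : Matrix (Fin 1) (Fin 2 × Fin 2) ℂ :=
  Matrix.of fun _ p => if p.1 = p.2 then 1 else 0

/-- Unnormalized projector onto `|Φ⁺⟩`. -/
def F4 : Matrix (Fin 2 × Fin 2) (Fin 2 × Fin 2) ℂ := Cmatᴴ * Cmat

lemma F4_psd : F4.PosSemidef := Matrix.posSemidef_conjTranspose_mul_self _

lemma F4_apply (p q : Fin 2 × Fin 2) :
    F4 p q = if p.1 = p.2 then (if q.1 = q.2 then 1 else 0) else 0 := by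
  simp [F4, Cmat, Matrix.mul_apply, Matrix.conjTranspose_apply, apply_ite star]
  split_ifs <;> rfl

def W16 : Matrix ((Fin 2 × Fin 2) × (Fin 2 × Fin 2)) ((Fin 2 × Fin 2) × (Fin 2 × Fin 2)) ℂ :=
  F4 ⊗ₖ (1 : Matrix (Fin 2 × Fin 2) (Fin 2 × Fin 2) ℂ)
    + (1 : Matrix (Fin 2 × Fin 2) (Fin 2 × Fin 2) ℂ) ⊗ₖ F4

lemma W16_psd : W16.PosSemidef :=
  (kron_psd F4_psd Matrix.PosSemidef.one).add (kron_psd Matrix.PosSemidef.one F4_psd)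

set_option maxHeartbeats 2000000 in
lemma master : ptBB W16 = (18 : ℂ) • (ρ₀ ⊗ₖ ρ₀) - (2 : ℂ) • (ρ₁ ⊗ₖ ρ₁) := by
  ext ⟨⟨a1, b1⟩, ⟨a2, b2⟩⟩ ⟨⟨c1, d1⟩, ⟨c2, d2⟩⟩
  fin_cases a1 <;> fin_cases b1 <;> fin_cases a2 <;> fin_cases b2 <;>
    fin_cases c1 <;> fin_cases d1 <;> fin_cases c2 <;> fin_cases d2 <;>
    simp [ptBB, W16, F4_apply, ρ₀, ρ₁, idx4, Matrix.one_apply] <;> norm_num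

lemma trace_W16 : W16.trace = 16 := by
  have hF : F4.trace = 2 := by
    simp [Matrix.trace, Fintype.sum_prod_type, Fin.sum_univ_succ, F4_apply, Matrix.diag]
  have h1 : (1 : Matrix (Fin 2 × Fin 2) (Fin 2 × Fin 2) ℂ).trace = 4 := by
    simp [Matrix.trace_one]
  rw [W16, Matrix.trace_add, Matrix.trace_kronecker, Matrix.trace_kronecker, hF, h1]; norm_num

lemma trace_ρ₁kron : (ρ₁ ⊗ₖ ρ₁).trace = 1 := by
  have h : ρ₁.trace = 1 := by
    simp [Matrix.trace, Fintype.sum_prod_type, Fin.sum_univ_succ, ρ₁, idx4, Matrix.diag,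
      Matrix.vecHead, Matrix.vecTail]
    norm_num
  rw [Matrix.trace_kronecker, h, one_mul]

def Dmat : Matrix (Fin 1) (Fin 2 × Fin 2) ℂ :=
  Matrix.of fun _ p => if p = (0, 1) then 1 else if p = (1, 0) then -1 else 0

def G4 : Matrix (Fin 2 × Fin 2) (Fin 2 × Fin 2) ℂ := Dmatᴴ * Dmat

lemma G4_eq : G4 = (2 : ℂ) • ρ₁ := by
  ext ⟨a, b⟩ ⟨c, d⟩
  fin_cases a <;> fin_cases b <;> fin_cases c <;> fin_cases d <;>
    simp [G4, Dmat, ρ₁, idx4, Matrix.mul_apply, Matrix.conjTranspose_apply]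

lemma kron_ρ₁_psd : ((4 : ℂ) • (ρ₁ ⊗ₖ ρ₁)).PosSemidef := by
  have h : (G4 ⊗ₖ G4) = (4 : ℂ) • (ρ₁ ⊗ₖ ρ₁) := by
    rw [G4_eq, Matrix.smul_kronecker, Matrix.kronecker_smul, smul_smul]
    norm_num
  rw [← h]
  exact kron_psd (Matrix.posSemidef_conjTranspose_mul_self _)
    (Matrix.posSemidef_conjTranspose_mul_self _)

/-- PPT attackers succeed with probability at most `17/18` in the two-round
symmetric/antisymmetric Bell-state discrimination protocol. -/
theorem ppt_bound_two_rounds :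
    ∀ P₀ : Matrix ((Fin 2 × Fin 2) × (Fin 2 × Fin 2)) ((Fin 2 × Fin 2) × (Fin 2 × Fin 2)) ℂ,
      P₀.PosSemidef → (1 - P₀).PosSemidef →
      (ptBB P₀).PosSemidef → (ptBB (1 - P₀)).PosSemidef →
      ((1/2 : ℂ) * ((P₀ * (ρ₀ ⊗ₖ ρ₀)).trace + ((1 - P₀) * (ρ₁ ⊗ₖ ρ₁)).trace)).re ≤ 17/18 := by
  intro P₀ h0 h1 h2 h3
  set t0 := (P₀ * (ρ₀ ⊗ₖ ρ₀)).trace with ht0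
  set t1 := (P₀ * (ρ₁ ⊗ₖ ρ₁)).trace with ht1
  set s := (ptBB P₀ * W16).trace with hs
  -- identity: 18 t0 - 2 t1 = s
  have hkey : 18 * t0 - 2 * t1 = s := by
    rw [hs, ← trace_mul_ptBB, master, Matrix.mul_sub, Matrix.trace_sub,
      Matrix.mul_smul, Matrix.mul_smul, Matrix.trace_smul, Matrix.trace_smul,
      smul_eq_mul, smul_eq_mul, ht0, ht1]
  -- bound: s.re ≤ 16
  have hpt : (1 - ptBB P₀).PosSemidef := by
    have e : ptBB (1 - P₀) = 1 - ptBB P₀ := by rw [ptBB_sub, ptBB_one]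
    rwa [e] at h3
  have hs16 : s.re ≤ 16 := by
    have h := trace_mul_nonneg hpt W16_psd
    rw [Matrix.sub_mul, Matrix.trace_sub, Matrix.one_mul, trace_W16, ← hs] at h
    have := (Complex.le_def.mp h).1
    simp only [Complex.zero_re, Complex.sub_re] at this
    have h16 : (16 : ℂ).re = 16 := by norm_num
    linarith [this, h16 ▸ this]
  -- bound: 0 ≤ t1.re
  have ht1nn : 0 ≤ t1.re := by
    have h := trace_mul_nonneg h0 kron_ρ₁_psd
    rw [Matrix.mul_smul, Matrix.trace_smul, smul_eq_mul, ← ht1] at h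
    have := (Complex.le_def.mp h).1
    simp only [Complex.zero_re, Complex.mul_re] at this
    have h4re : (4 : ℂ).re = 4 := by norm_num
    have h4im : (4 : ℂ).im = 0 := by norm_num
    rw [h4re, h4im] at this
    linarith
  -- rewrite second trace
  have hsecond : ((1 - P₀) * (ρ₁ ⊗ₖ ρ₁)).trace = 1 - t1 := by
    rw [Matrix.sub_mul, Matrix.trace_sub, Matrix.one_mul, trace_ρ₁kron, ht1]
  rw [hsecond]
  -- take real parts
  have hre : 18 * t0.re - 2 * t1.re = s.re := by
    have := congrArg Complex.re hkey
    simpa [Complex.sub_re, Complex.mul_re] using this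
  have goal_re : ((1/2 : ℂ) * (t0 + (1 - t1))).re = (t0.re + (1 - t1.re)) / 2 := by
    simp [Complex.mul_re, Complex.add_re, Complex.sub_re, Complex.add_im, Complex.sub_im,
      Complex.one_re, Complex.one_im]
    ring
  rw [goal_re]
  linarith
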